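/- arXiv:1012.3218 — 3 statements merged into one kernel-verified Lean document; each statement's English description precedes it below -/
import Mathlib

section
/- Let $-1<m<0$, $R_0>0$, $\eta>0$, and let $f$ be a $C^2$ solution of $(f'/f^{1-m})' + \frac{1}{1+m}f - \frac{m}{1+m} r f' = 0$ with $f>0$ on $[0,R_0)$, $f(0)=\eta$, $f'(0)=0$. Then $f(r) - m r f'(r) > 0$ for all $r \in [0,R_0)$. -/
open Set

theorem stmt_0 (m R0 η : ℝ) (hm1 : -1 < m) (hm0 : m < 0) (hR0 : 0 < R0) (hη : 0 < η)
    (f : ℝ → ℝ) (hf : ContDiffOn ℝ 2 f (Ico 0 R0))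
    (hpos : ∀ r ∈ Ico (0:ℝ) R0, 0 < f r)
    (hode : ∀ r ∈ Ico (0:ℝ) R0,
      deriv (fun s => deriv f s / f s ^ (1 - m)) r
        + (1 / (1 + m)) * f r - (m / (1 + m)) * r * deriv f r = 0)
    (hf0 : f 0 = η) (hf'0 : deriv f 0 = 0) :
    ∀ r ∈ Ico (0:ℝ) R0, 0 < f r - m * r * deriv f r := by
  have hm : (0:ℝ) < 1 + m := by linarith
  have hmne : m ≠ 0 := ne_of_lt hm0
  set G : ℝ → ℝ := fun s => deriv f s / f s ^ (1 - m) with hGdef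
  set c : ℝ → ℝ := fun t => m * t * f t ^ (1 - m) / (1 + m) with hcdef
  set φ : ℝ → ℝ := fun u => u * G u - f u ^ m / m with hφdef
  have hUopen : IsOpen (Ioo (0:ℝ) R0) := isOpen_Ioo
  have hUs : Ioo (0:ℝ) R0 ⊆ Ico 0 R0 := Ioo_subset_Ico_self
  have hfU : ContDiffOn ℝ 2 f (Ioo 0 R0) := hf.mono hUs
  have h21 : ContDiffOn ℝ ((1:WithTop ℕ∞) + 1) f (Ioo 0 R0) := by
    exact_mod_cast hfU
  obtain ⟨hfd, -, hf'c⟩ := (contDiffOn_succ_iff_deriv_of_isOpen hUopen).mp h21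
  have hdf' : DifferentiableOn ℝ (deriv f) (Ioo 0 R0) := hf'c.differentiableOn one_ne_zero
  -- key derivative computation
  have key : ∀ t ∈ Ioo (0:ℝ) R0, HasDerivAt φ (c t * φ t) t := by
    intro t ht
    have hts : t ∈ Ico (0:ℝ) R0 := hUs ht
    have hft : 0 < f t := hpos t hts
    have hA : (0:ℝ) < f t ^ (1 - m) := Real.rpow_pos_of_pos hft _
    have hderf : HasDerivAt f (deriv f t) t :=
      (hfd.differentiableAt (hUopen.mem_nhds ht)).hasDerivAt
    have hderf2 : DifferentiableAt ℝ (deriv f) t := hdf'.differentiableAt (hUopen.mem_nhds ht)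
    have hpow : HasDerivAt (fun u => f u ^ (1 - m))
        (deriv f t * (1 - m) * f t ^ (1 - m - 1)) t := hderf.rpow_const (Or.inl hft.ne')
    have hGdiff : DifferentiableAt ℝ G t := hderf2.div hpow.differentiableAt hA.ne'
    have hGd : HasDerivAt G (deriv G t) t := hGdiff.hasDerivAt
    have hodeval : deriv G t = m / (1 + m) * t * deriv f t - 1 / (1 + m) * f t := by
      have := hode t hts
      linarith
    have hinv : f t ^ (m - 1) = (f t ^ (1 - m))⁻¹ := by
      rw [show m - 1 = -(1 - m) by ring, Real.rpow_neg hft.le]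
    have hW : HasDerivAt (fun u => f u ^ m / m) (G t) t := by
      have h0 := (hderf.rpow_const (p := m) (Or.inl hft.ne')).div_const m
      refine h0.congr_deriv ?_
      symm
      rw [hGdef]
      simp only []
      rw [hinv]
      rw [div_eq_mul_inv]
      field_simp
    have hφd : HasDerivAt φ (1 * G t + t * deriv G t - G t) t :=
      ((hasDerivAt_id t).mul hGd).sub hW
    have heq : 1 * G t + t * deriv G t - G t = c t * φ t := by
      rw [hodeval]
      have hAB : f t ^ (1 - m) * f t ^ m = f t := by
        rw [← Real.rpow_add hft]; norm_num
      rw [hφdef, hcdef, hGdef]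
      simp only []
      set A := f t ^ (1 - m) with hAdef
      set B := f t ^ m with hBdef
      rw [← hAB]
      field_simp
      ring
    rw [heq] at hφd
    exact hφd
  -- algebraic identity
  have hId : ∀ t ∈ Ico (0:ℝ) R0, f t - m * t * deriv f t = (-m * f t ^ (1 - m)) * φ t := by
    intro t hts
    have hft : 0 < f t := hpos t hts
    have hA : (0:ℝ) < f t ^ (1 - m) := Real.rpow_pos_of_pos hft _
    have hAB : f t ^ (1 - m) * f t ^ m = f t := by
      rw [← Real.rpow_add hft]; norm_num
    rw [hφdef, hGdef]
    simp only []
    set A := f t ^ (1 - m) with hAdef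
    set B := f t ^ m with hBdef
    rw [← hAB]
    field_simp
    ring
  -- main goal
  intro r hr
  rcases eq_or_lt_of_le hr.1 with h0 | hrpos
  · rw [← h0]
    simp [hf0, hη]
  rw [hId r hr]
  have hA : (0:ℝ) < f r ^ (1 - m) := Real.rpow_pos_of_pos (hpos r hr) _
  have hmA : (0:ℝ) < -m * f r ^ (1 - m) := mul_pos (by linarith) hA
  refine mul_pos hmA ?_
  by_contra hcon
  push_neg at hcon
  -- continuity of the derivWithin-version near 0
  have hsUD : UniqueDiffOn ℝ (Ico (0:ℝ) R0) := uniqueDiffOn_Ico 0 R0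
  set Φ : ℝ → ℝ := fun t => t * (derivWithin f (Ico 0 R0) t / f t ^ (1 - m)) - f t ^ m / m
    with hΦdef
  have hdWc : ContinuousOn (derivWithin f (Ico 0 R0)) (Ico 0 R0) :=
    hf.continuousOn_derivWithin hsUD (by norm_num)
  have hfc : ContinuousOn f (Ico (0:ℝ) R0) := hf.continuousOn
  have hΦcont : ContinuousOn Φ (Ico (0:ℝ) R0) := by
    have h1 : ContinuousOn (fun t => f t ^ (1 - m)) (Ico (0:ℝ) R0) :=
      hfc.rpow_const fun x hx => Or.inl (hpos x hx).ne'
    have h2 : ContinuousOn (fun t => f t ^ m) (Ico (0:ℝ) R0) :=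
      hfc.rpow_const fun x hx => Or.inl (hpos x hx).ne'
    exact (continuousOn_id.mul (hdWc.div h1 fun x hx =>
      (Real.rpow_pos_of_pos (hpos x hx) _).ne')).sub (h2.div_const m)
  have hΦeq : ∀ t ∈ Ioo (0:ℝ) R0, Φ t = φ t := by
    intro t ht
    rw [hΦdef, hφdef, hGdef]
    simp only []
    rw [derivWithin_of_mem_nhds (Filter.mem_of_superset (hUopen.mem_nhds ht) hUs)]
  have hΦ0 : 0 < Φ 0 := by
    rw [hΦdef]
    simp only [hf0]
    rw [zero_mul, zero_sub]
    exact neg_pos.mpr (div_neg_of_pos_of_neg (Real.rpow_pos_of_pos hη m) hm0)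
  have h0s : (0:ℝ) ∈ Ico (0:ℝ) R0 := ⟨le_refl 0, hR0⟩
  have hev : ∀ᶠ t in nhdsWithin 0 (Ico (0:ℝ) R0), 0 < Φ t :=
    (hΦcont 0 h0s).eventually (eventually_gt_nhds hΦ0)
  rw [Filter.eventually_iff, Metric.mem_nhdsWithin_iff] at hev
  obtain ⟨δ, hδ, hball⟩ := hev
  set ε := min (δ / 2) (r / 2) with hεdef
  have hε0 : 0 < ε := lt_min (by linarith) (by linarith)
  have hεδ : ε < δ := lt_of_le_of_lt (min_le_left _ _) (by linarith)
  have hεr : ε < r := lt_of_le_of_lt (min_le_right _ _) (by linarith)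
  have hεU : ε ∈ Ioo (0:ℝ) R0 := ⟨hε0, lt_trans hεr hr.2⟩
  have hΦε : 0 < Φ ε := by
    apply hball
    constructor
    · rw [Metric.mem_ball, Real.dist_eq, sub_zero, abs_of_pos hε0]
      exact hεδ
    · exact hUs hεU
  have hφε : 0 < φ ε := by rw [← hΦeq ε hεU]; exact hΦε
  -- set up on [ε, r]
  have hsubU : Icc ε r ⊆ Ioo (0:ℝ) R0 := fun t ht =>
    ⟨lt_of_lt_of_le hε0 ht.1, lt_of_le_of_lt ht.2 hr.2⟩
  have hφcont : ContinuousOn φ (Icc ε r) := fun t ht =>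
    ((key t (hsubU ht)).differentiableAt.continuousAt).continuousWithinAt
  -- zero set and first zero
  set Z : Set ℝ := Icc ε r ∩ φ ⁻¹' {0} with hZdef
  have hZne : Z.Nonempty := by
    obtain ⟨t0, ht0, ht0v⟩ := intermediate_value_Icc' hεr.le hφcont ⟨hcon, hφε.le⟩
    exact ⟨t0, ht0, ht0v⟩
  have hZclosed : IsClosed Z :=
    hφcont.preimage_isClosed_of_isClosed isClosed_Icc isClosed_singleton
  have hZbdd : BddBelow Z := ⟨ε, fun t ht => ht.1.1⟩
  set t1 := sInf Z with ht1def
  have ht1Z : t1 ∈ Z := hZclosed.csInf_mem hZne hZbdd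
  have ht1v : φ t1 = 0 := ht1Z.2
  have hεt1 : ε < t1 := by
    rcases lt_or_eq_of_le ht1Z.1.1 with h | h
    · exact h
    · exfalso; rw [← h] at ht1v; exact hφε.ne' ht1v
  have ht1r : t1 ≤ r := ht1Z.1.2
  have hφposIco : ∀ t ∈ Ico ε t1, 0 < φ t := by
    intro t ht
    by_contra hc
    push_neg at hc
    have htr : t ≤ r := ht.2.le.trans ht1r
    have hcont2 : ContinuousOn φ (Icc ε t) := hφcont.mono (Icc_subset_Icc le_rfl htr)
    obtain ⟨u, hu, huv⟩ := intermediate_value_Icc' ht.1 hcont2 ⟨hc, hφε.le⟩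
    have huZ : u ∈ Z := ⟨⟨hu.1, hu.2.trans htr⟩, huv⟩
    have := csInf_le hZbdd huZ
    have : t1 ≤ t := this.trans hu.2
    linarith [ht.2]
  -- bound on c on [ε, t1]
  have hsub2 : Icc ε t1 ⊆ Icc ε r := Icc_subset_Icc le_rfl ht1r
  have hccont : ContinuousOn (fun t => -(c t)) (Icc ε t1) := by
    have hfc2 : ContinuousOn f (Icc ε t1) := hfc.mono fun t ht => hUs (hsubU (hsub2 ht))
    have h1 : ContinuousOn (fun t => f t ^ (1 - m)) (Icc ε t1) :=
      hfc2.rpow_const fun x hx => Or.inl (hpos x (hUs (hsubU (hsub2 hx)))).ne'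
    rw [hcdef]
    exact (((continuousOn_const.mul continuousOn_id).mul h1).div_const (1 + m)).neg
  obtain ⟨x₀, hx₀, hK⟩ := isCompact_Icc.exists_isMaxOn ⟨ε, left_mem_Icc.mpr hεt1.le⟩ hccont
  set K := -(c x₀) with hKdef
  -- monotone auxiliary function
  set ψ : ℝ → ℝ := fun t => φ t * Real.exp (K * t) with hψdef
  have hψd : ∀ t ∈ Icc ε t1, HasDerivAt ψ ((c t + K) * φ t * Real.exp (K * t)) t := by
    intro t ht
    have h1 : HasDerivAt (fun u => Real.exp (K * u)) (Real.exp (K * t) * K) t := by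
      have := ((hasDerivAt_id' t).const_mul K).exp
      rwa [mul_one] at this
    have h2 := (key t (hsubU (hsub2 ht))).mul h1
    rw [hψdef]
    refine h2.congr_deriv ?_
    ring
  have hψmono : MonotoneOn ψ (Icc ε t1) := by
    apply monotoneOn_of_deriv_nonneg (convex_Icc ε t1)
    · intro t ht
      exact ((hψd t ht).differentiableAt.continuousAt).continuousWithinAt
    · intro t ht
      rw [interior_Icc] at ht
      exact ((hψd t (Ioo_subset_Icc_self ht)).differentiableAt).differentiableWithinAt
    · intro t ht
      rw [interior_Icc] at ht
      rw [(hψd t (Ioo_subset_Icc_self ht)).deriv]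
      have hφt : 0 ≤ φ t := (hφposIco t ⟨ht.1.le, ht.2⟩).le
      have hcK : 0 ≤ c t + K := by
        have := hK (Ioo_subset_Icc_self ht)
        simp only [Set.mem_setOf_eq] at this
        linarith
      exact mul_nonneg (mul_nonneg hcK hφt) (Real.exp_pos _).le
  have hle := hψmono (left_mem_Icc.mpr hεt1.le) (right_mem_Icc.mpr hεt1.le) hεt1.le
  have hψε : 0 < ψ ε := mul_pos hφε (Real.exp_pos _)
  have hψt1 : ψ t1 = 0 := by rw [hψdef]; simp [ht1v]
  rw [hψt1] at hle
  linarith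
end

section
/- Let $-1<m<0$, $R_0>0$, $\eta>0$, and let $f$ be a $C^2$ solution of $(f'/f^{1-m})' + \frac{1}{1+m}f - \frac{m}{1+m} r f' = 0$ with $f>0$ on $[0,R_0)$, $f(0)=\eta$, $f'(0)=0$. Then $f'(r)<0$ for all $r\in(0,R_0)$; in particular $f$ is strictly decreasing on $(0,R_0)$. -/
open Set Filter Topology

lemma aux_slope_right {g : ℝ → ℝ} {d r : ℝ} (h : HasDerivAt g d r) (hd : d < 0)
    (h0 : g r = 0) : ∀ᶠ x in 𝓝[>] r, g x < 0 := by
  have ht := hasDerivAt_iff_tendsto_slope.mp h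
  have hev : ∀ᶠ x in 𝓝[≠] r, slope g r x < 0 := ht.eventually_lt_const hd
  have hmono : 𝓝[>] r ≤ 𝓝[≠] r := nhdsWithin_mono r (fun x hx => ne_of_gt hx)
  filter_upwards [hev.filter_mono hmono, self_mem_nhdsWithin] with x hx hxr
  rw [slope_def_field, h0, sub_zero] at hx
  have hxr' : (0:ℝ) < x - r := sub_pos.mpr hxr
  rcases div_neg_iff.mp hx with ⟨_, h2⟩ | ⟨h1, _⟩
  · linarith
  · exact h1

lemma aux_slope_left {g : ℝ → ℝ} {d r : ℝ} (h : HasDerivAt g d r) (hd : d < 0)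
    (h0 : g r = 0) : ∀ᶠ x in 𝓝[<] r, 0 < g x := by
  have ht := hasDerivAt_iff_tendsto_slope.mp h
  have hev : ∀ᶠ x in 𝓝[≠] r, slope g r x < 0 := ht.eventually_lt_const hd
  have hmono : 𝓝[<] r ≤ 𝓝[≠] r := nhdsWithin_mono r (fun x hx => ne_of_lt hx)
  filter_upwards [hev.filter_mono hmono, self_mem_nhdsWithin] with x hx hxr
  rw [slope_def_field, h0, sub_zero] at hx
  have hxr' : x - r < 0 := sub_neg.mpr hxr
  rcases div_neg_iff.mp hx with ⟨h1, h2⟩ | ⟨h1, h2⟩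
  · linarith
  · linarith

theorem stmt_1 (m R0 η : ℝ) (hm1 : -1 < m) (hm0 : m < 0) (hR0 : 0 < R0) (hη : 0 < η)
    (f : ℝ → ℝ) (hf : ContDiffOn ℝ 2 f (Ico 0 R0))
    (hpos : ∀ r ∈ Ico (0:ℝ) R0, 0 < f r)
    (hode : ∀ r ∈ Ico (0:ℝ) R0,
      deriv (fun s => deriv f s / f s ^ (1 - m)) r
        + (1 / (1 + m)) * f r - (m / (1 + m)) * r * deriv f r = 0)
    (hf0 : f 0 = η) (hf'0 : deriv f 0 = 0) :
    (∀ r ∈ Ioo (0:ℝ) R0, deriv f r < 0) ∧ StrictAntiOn f (Ioo 0 R0) := by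
  have hm : (0:ℝ) < 1 + m := by linarith
  set G : ℝ → ℝ := fun s => deriv f s / f s ^ (1 - m) with hGdef
  have hD : ∀ r ∈ Ico (0:ℝ) R0, (0:ℝ) < f r ^ (1 - m) := fun r hr =>
    Real.rpow_pos_of_pos (hpos r hr) _
  -- the ODE rewritten for G
  have hodeG : ∀ r ∈ Ico (0:ℝ) R0, deriv f r = 0 →
      HasDerivAt G (-(f r / (1 + m))) r := by
    intro r hr hdf0
    have h1 := hode r hr
    have hne1 : (1 + m) ≠ 0 := ne_of_gt hm
    have h2 : deriv G r = -(f r / (1 + m)) := by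
      rw [hdf0, mul_zero, sub_zero] at h1
      field_simp at h1 ⊢
      linarith
    have hne : deriv G r ≠ 0 := by
      rw [h2]
      have := hpos r hr
      exact neg_ne_zero.mpr (ne_of_gt (div_pos this hm))
    have hdiff : DifferentiableAt ℝ G r := by
      by_contra hcon
      exact hne (deriv_zero_of_not_differentiableAt hcon)
    have := hdiff.hasDerivAt
    rwa [h2] at this
  -- continuity of G on the open interval
  have hf2 : ContDiffOn ℝ 2 f (Ioo 0 R0) := hf.mono Ioo_subset_Ico_self
  have hdfc : ContinuousOn (deriv f) (Ioo 0 R0) :=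
    hf2.continuousOn_deriv_of_isOpen isOpen_Ioo one_le_two
  have hGc : ContinuousOn G (Ioo 0 R0) := by
    apply hdfc.div ((hf2.continuousOn).rpow_const ?_)
    · intro x hx
      exact ne_of_gt (hD x (Ioo_subset_Ico_self hx))
    · intro x hx
      exact Or.inl (ne_of_gt (hpos x (Ioo_subset_Ico_self hx)))
  -- main claim
  have claim : ∀ r ∈ Ioo (0:ℝ) R0, G r < 0 := by
    by_contra hc
    push_neg at hc
    obtain ⟨r₀, hr₀, hg₀⟩ := hc
    -- near 0, G is negative
    have h0mem : (0:ℝ) ∈ Ico (0:ℝ) R0 := ⟨le_refl _, hR0⟩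
    have hG0 : G 0 = 0 := by simp [hGdef, hf'0]
    have hD0 : HasDerivAt G (-(f 0 / (1 + m))) 0 := hodeG 0 h0mem hf'0
    have hd0neg : -(f 0 / (1 + m)) < 0 := by
      rw [hf0]; rw [neg_lt, neg_zero]; positivity
    have hnear := aux_slope_right hD0 hd0neg hG0
    rw [eventually_nhdsWithin_iff] at hnear
    obtain ⟨ε, hε, hsub⟩ := Metric.eventually_nhds_iff.mp hnear
    have hnear' : ∀ x ∈ Ioo (0:ℝ) ε, G x < 0 := by
      intro x hx
      refine hsub ?_ hx.1
      rw [Real.dist_eq, sub_zero, abs_of_pos hx.1]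
      exact hx.2
    rcases lt_or_ge r₀ ε with hcase | hcase
    · exact absurd (hnear' r₀ ⟨hr₀.1, hcase⟩) (not_lt.mpr hg₀)
    -- the set of points in [ε, r₀] where G ≥ 0
    have hIcc : Icc ε r₀ ⊆ Ioo (0:ℝ) R0 := fun x hx =>
      ⟨lt_of_lt_of_le hε hx.1, lt_of_le_of_lt hx.2 hr₀.2⟩
    set T : Set ℝ := Icc ε r₀ ∩ G ⁻¹' (Ici 0) with hTdef
    have hTclosed : IsClosed T :=
      (hGc.mono hIcc).preimage_isClosed_of_isClosed isClosed_Icc isClosed_Ici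
    have hTne : T.Nonempty := ⟨r₀, ⟨hcase, le_refl _⟩, hg₀⟩
    have hTbdd : BddBelow T := (BddBelow.mono (inter_subset_left) bddBelow_Icc)
    set rs := sInf T with hrs
    have hrsT : rs ∈ T := hTclosed.csInf_mem hTne hTbdd
    have hrs_mem : rs ∈ Ioo (0:ℝ) R0 := hIcc hrsT.1
    have hrsε : ε ≤ rs := hrsT.1.1
    -- G is negative strictly before rs
    have hless : ∀ x ∈ Ioo (0:ℝ) rs, G x < 0 := by
      intro x hx
      rcases lt_or_ge x ε with h | h
      · exact hnear' x ⟨hx.1, h⟩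
      · have hxT : x ∉ T := notMem_of_lt_csInf hx.2 hTbdd
        have : x ∈ Icc ε r₀ := ⟨h, le_trans hx.2.le hrsT.1.2⟩
        by_contra hcon
        push_neg at hcon
        exact hxT ⟨this, hcon⟩
    -- G rs = 0
    have hGrs_le : G rs ≤ 0 := by
      have hca : ContinuousAt G rs := hGc.continuousAt (isOpen_Ioo.mem_nhds hrs_mem)
      have htend : Tendsto G (𝓝[<] rs) (𝓝 (G rs)) := hca.tendsto.mono_left nhdsWithin_le_nhds
      refine le_of_tendsto htend ?_
      have hIoo : Ioo (0:ℝ) rs ∈ 𝓝[<] rs := by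
        apply mem_nhdsWithin.mpr
        exact ⟨Ioi 0, isOpen_Ioi, hrs_mem.1, fun x hx => ⟨hx.1, hx.2⟩⟩
      filter_upwards [hIoo] with x hx
      exact (hless x hx).le
    have hGrs : G rs = 0 := le_antisymm hGrs_le hrsT.2
    have hdfrs : deriv f rs = 0 := by
      have := hGrs
      rw [hGdef] at this
      simp only [div_eq_zero_iff] at this
      rcases this with h | h
      · exact h
      · exact absurd h (ne_of_gt (hD rs (mem_of_mem_of_subset hrs_mem Ioo_subset_Ico_self)))
    have hDrs : HasDerivAt G (-(f rs / (1 + m))) rs :=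
      hodeG rs (Ioo_subset_Ico_self hrs_mem) hdfrs
    have hdneg : -(f rs / (1 + m)) < 0 := by
      have := hpos rs (Ioo_subset_Ico_self hrs_mem)
      rw [neg_lt, neg_zero]; positivity
    have hposleft := aux_slope_left hDrs hdneg hGrs
    have hIoo : Ioo (0:ℝ) rs ∈ 𝓝[<] rs := by
      apply mem_nhdsWithin.mpr
      exact ⟨Ioi 0, isOpen_Ioi, hrs_mem.1, fun x hx => ⟨hx.1, hx.2⟩⟩
    obtain ⟨x, hx1, hx2⟩ := (hposleft.and (Filter.eventually_of_mem hIoo (fun x hx => hx))).exists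
    exact absurd (hless x hx2) (not_lt.mpr hx1.le)
  -- conclude
  have hf'neg : ∀ r ∈ Ioo (0:ℝ) R0, deriv f r < 0 := by
    intro r hr
    have hg := claim r hr
    have hDr := hD r (Ioo_subset_Ico_self hr)
    have : deriv f r = G r * f r ^ (1 - m) :=
      (div_mul_cancel₀ _ (ne_of_gt hDr)).symm
    rw [this]
    exact mul_neg_of_neg_of_pos hg hDr
  refine ⟨hf'neg, ?_⟩
  exact strictAntiOn_of_deriv_neg (convex_Ioo 0 R0)
    (hf.continuousOn.mono Ioo_subset_Ico_self)
    (by rw [interior_Ioo]; exact hf'neg)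
end

section
/- Let $-1<m<0$ and let $f$ be a positive solution on $(0,\infty)$ of $(f'/f^{1-m})' + \frac{1}{1+m}f - \frac{m}{1+m} r f' = 0$ with $f(0)=\eta>0$, $f'(0)=0$, $\int_0^\infty f = \mu$. Set $w(r)=r^{-1/m} f(r)$. Then $w$ satisfies $\big(\frac{w'}{w^{1-m}}\big)' + \frac{2}{r}\,\frac{w'}{w^{1-m}} - \frac{m}{1+m} r^{1/m} w' = 0$ on $(0,\infty)$, and $w'(r)>0$ for all $r>0$. -/
open Set

set_option maxHeartbeats 1000000 in
theorem stmt_6 (m η μ : ℝ) (hm1 : -1 < m) (hm0 : m < 0) (hη : 0 < η) (hμ : 0 < μ)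
    (f : ℝ → ℝ) (hfsmooth : ContDiffOn ℝ 2 f (Ici 0))
    (hfpos : ∀ r ∈ Ici (0:ℝ), 0 < f r)
    (hode : ∀ r ∈ Ioi (0:ℝ),
      deriv (fun s => deriv f s / f s ^ (1 - m)) r
        + (1 / (1 + m)) * f r - (m / (1 + m)) * r * deriv f r = 0)
    (hf0 : f 0 = η) (hf'0 : deriv f 0 = 0)
    (hmass : (∫ r in Ioi (0:ℝ), f r) = μ)
    (w : ℝ → ℝ) (hwdef : ∀ r, w r = r ^ (-(1 / m)) * f r) :
    (∀ r ∈ Ioi (0:ℝ),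
      deriv (fun s => deriv w s / w s ^ (1 - m)) r
        + (2 / r) * (deriv w r / w r ^ (1 - m))
        - (m / (1 + m)) * r ^ (1 / m) * deriv w r = 0) ∧
    (∀ r > (0:ℝ), 0 < deriv w r) := by
  have hm0' : m ≠ 0 := ne_of_lt hm0
  have h1m : (0:ℝ) < 1 + m := by linarith
  have h1m' : (1:ℝ) + m ≠ 0 := ne_of_gt h1m
  have hsub : Ioi (0:ℝ) ⊆ Ici 0 := Ioi_subset_Ici_self
  have hw : w = fun r : ℝ => r ^ (-(1 / m)) * f r := funext hwdef
  subst hw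
  have h1mneg : 1 / m < 0 := div_neg_of_pos_of_neg one_pos hm0
  have hC : ContDiffOn ℝ 2 f (Ioi 0) := hfsmooth.mono hsub
  have hfd : ∀ s ∈ Ioi (0:ℝ), HasDerivAt f (deriv f s) s := fun s hs =>
    ((hC.differentiableOn (by norm_num)).differentiableAt (isOpen_Ioi.mem_nhds hs)).hasDerivAt
  have hfd2 : ∀ s ∈ Ioi (0:ℝ), HasDerivAt (deriv f) (deriv (deriv f) s) s := fun s hs =>
    (((hC.deriv_of_isOpen (m := 1) isOpen_Ioi (by norm_num)).differentiableOn
      (by norm_num)).differentiableAt (isOpen_Ioi.mem_nhds hs)).hasDerivAt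
  have hdfc : ContinuousOn (deriv f) (Ioi 0) :=
    hC.continuousOn_deriv_of_isOpen isOpen_Ioi (by norm_num)
  have hfpos' : ∀ s ∈ Ioi (0:ℝ), 0 < f s := fun s hs => hfpos s (hsub hs)
  have hq : ∀ s ∈ Ioi (0:ℝ), HasDerivAt (fun s => deriv f s / f s ^ (1 - m))
      ((deriv (deriv f) s * f s ^ (1 - m)
        - deriv f s * (deriv f s * (1 - m) * f s ^ (1 - m - 1))) / (f s ^ (1 - m)) ^ 2) s := by
    intro s hs
    have hfs := hfpos' s hs
    exact (hfd2 s hs).div ((hfd s hs).rpow_const (Or.inl hfs.ne'))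
      (Real.rpow_pos_of_pos hfs _).ne'
  -- derivative of w on Ioi 0
  have hw' : ∀ s ∈ Ioi (0:ℝ), HasDerivAt (fun x : ℝ => x ^ (-(1 / m)) * f x)
      (-(1 / m) * s ^ (-(1 / m) - 1) * f s + s ^ (-(1 / m)) * deriv f s) s := by
    intro s hs
    have hs0 : (0:ℝ) < s := hs
    exact (Real.hasDerivAt_rpow_const (p := -(1 / m)) (Or.inl hs0.ne')).mul (hfd s hs)
  -- the linear ODE satisfied by phi = f - m r f'
  set b : ℝ → ℝ := fun s => (1 - m) * (deriv f s / f s) + m * s * f s ^ (1 - m) / (1 + m)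
    with hbdef
  have hφd : ∀ s ∈ Ioi (0:ℝ), HasDerivAt (fun x : ℝ => f x - m * (x * deriv f x))
      (b s * (f s - m * (s * deriv f s))) s := by
    intro s hs
    have hs0 : (0:ℝ) < s := hs
    have hfs := hfpos' s hs
    have hA : (0:ℝ) < f s ^ (1 - m) := Real.rpow_pos_of_pos hfs _
    have hAne := hA.ne'
    have hfne := hfs.ne'
    have hE := hode s hs
    rw [(hq s hs).deriv] at hE
    have hpow : f s ^ (1 - m - 1) = f s ^ (1 - m) / f s := by
      rw [show (1 - m - 1 : ℝ) = (1 - m) - 1 by ring, Real.rpow_sub hfs, Real.rpow_one]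
    rw [hpow] at hE
    have hEsimp : (deriv (deriv f) s * f s ^ (1 - m)
          - deriv f s * (deriv f s * (1 - m) * (f s ^ (1 - m) / f s))) / (f s ^ (1 - m)) ^ 2
        = deriv (deriv f) s / f s ^ (1 - m)
          - (1 - m) * (deriv f s) ^ 2 / (f s ^ (1 - m) * f s) := by
      field_simp
    rw [hEsimp] at hE
    have h3 := (hfd s hs).sub (((hasDerivAt_id s).mul (hfd2 s hs)).const_mul m)
    have h4 : HasDerivAt (fun x : ℝ => f x - m * (x * deriv f x))
        (deriv f s - m * (1 * deriv f s + s * deriv (deriv f) s)) s := h3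
    have e : deriv f s - m * (1 * deriv f s + s * deriv (deriv f) s)
        = b s * (f s - m * (s * deriv f s)) := by
      rw [hbdef]
      linear_combination (norm := (field_simp; ring))
        (-(m * s) * f s ^ (1 - m)) * hE
    rwa [e] at h4
  -- continuity of b
  have hcf : ContinuousOn f (Ioi 0) := hC.continuousOn
  have hcA : ContinuousOn (fun s => f s ^ (1 - m)) (Ioi 0) :=
    hcf.rpow_const (fun s _ => Or.inr (by linarith))
  have hcb : ContinuousOn b (Ioi 0) := by
    rw [hbdef]
    exact (continuousOn_const.mul (hdfc.div hcf (fun s hs => (hfpos' s hs).ne'))).add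
      (((continuousOn_const.mul continuousOn_id).mul hcA).div_const _)
  -- phi is eventually positive near 0
  have htf : Filter.Tendsto f (nhdsWithin 0 (Ioi 0)) (nhds η) := by
    have h := hfsmooth.continuousOn 0 self_mem_Ici
    rw [ContinuousWithinAt, hf0] at h
    exact h.mono_left (nhdsWithin_mono 0 hsub)
  have htg : Filter.Tendsto (fun s => m * (s * deriv f s)) (nhdsWithin 0 (Ioi 0)) (nhds 0) := by
    have hg : ContinuousOn (derivWithin f (Ici 0)) (Ici 0) :=
      hfsmooth.continuousOn_derivWithin (uniqueDiffOn_Ici 0) (by norm_num)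
    have h1 : Filter.Tendsto (fun s => m * (s * derivWithin f (Ici 0) s)) (nhdsWithin 0 (Ioi 0))
        (nhds (m * (0 * derivWithin f (Ici 0) 0))) := by
      apply Filter.Tendsto.const_mul
      exact (Filter.tendsto_id.mono_left nhdsWithin_le_nhds).mul
        ((hg 0 self_mem_Ici).mono_left (nhdsWithin_mono 0 hsub))
    rw [zero_mul, mul_zero] at h1
    refine h1.congr' ?_
    filter_upwards [self_mem_nhdsWithin] with s hs
    rw [derivWithin_of_mem_nhds (Filter.mem_of_superset (Ioi_mem_nhds hs) hsub)]
  have hφt : Filter.Tendsto (fun s => f s - m * (s * deriv f s)) (nhdsWithin 0 (Ioi 0))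
      (nhds η) := by
    have h := htf.sub htg
    simpa using h
  have hev : ∀ᶠ s in nhdsWithin 0 (Ioi 0), 0 < f s - m * (s * deriv f s) :=
    hφt.eventually (eventually_gt_nhds hη)
  obtain ⟨a, hapos, ha0⟩ := (hev.and self_mem_nhdsWithin).exists
  -- positivity of phi on Ioi 0
  have hφpos : ∀ r ∈ Ioi (0:ℝ), 0 < f r - m * (r * deriv f r) := by
    set B : ℝ → ℝ := fun s => ∫ t in a..s, b t with hBdef
    have hBd : ∀ s ∈ Ioi (0:ℝ), HasDerivAt B (b s) s := by
      intro s hs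
      refine intervalIntegral.integral_hasDerivAt_right
        ((hcb.mono (ordConnected_Ioi.uIcc_subset ha0 hs)).intervalIntegrable)
        (hcb.stronglyMeasurableAtFilter isOpen_Ioi s hs)
        (hcb.continuousAt (isOpen_Ioi.mem_nhds hs))
    set ψ : ℝ → ℝ := fun s => (f s - m * (s * deriv f s)) * Real.exp (-B s) with hψdef
    have hψd : ∀ s ∈ Ioi (0:ℝ), HasDerivAt ψ 0 s := by
      intro s hs
      have h := (hφd s hs).mul ((hBd s hs).neg.exp)
      have e : b s * (f s - m * (s * deriv f s)) * Real.exp (-B s)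
          + (f s - m * (s * deriv f s)) * (Real.exp (-B s) * -(b s)) = 0 := by ring
      simp only [Pi.neg_apply] at h
      rwa [e] at h
    have hψc : ∀ s ∈ Ioi (0:ℝ), ψ s = ψ a := by
      intro s hs
      refine (convex_Ioi (0:ℝ)).is_const_of_fderivWithin_eq_zero
        (fun x hx => (hψd x hx).differentiableAt.differentiableWithinAt) ?_ hs ha0
      intro x hx
      have h0 : HasFDerivAt ψ ((1 : ℝ →L[ℝ] ℝ).smulRight (0:ℝ)) x := (hψd x hx).hasFDerivAt
      rw [fderivWithin_of_isOpen isOpen_Ioi hx, h0.fderiv]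
      ext t
      simp
    intro r hr
    have h2 : ψ a = f a - m * (a * deriv f a) := by
      rw [hψdef]
      simp [hBdef, intervalIntegral.integral_same]
    have h1 : (f r - m * (r * deriv f r)) * Real.exp (-(B r)) = f a - m * (a * deriv f a) :=
      (hψc r hr).trans h2
    have hexp : (0:ℝ) < Real.exp (-(B r)) := Real.exp_pos _
    by_contra hcon
    push_neg at hcon
    nlinarith [mul_nonneg (neg_nonneg.mpr hcon) hexp.le, hapos, h1]
  constructor
  · -- the ODE for w
    intro r hr
    have hr0 : (0:ℝ) < r := hr
    have hF := hfpos' r hr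
    have hA : (0:ℝ) < f r ^ (1 - m) := Real.rpow_pos_of_pos hF _
    -- pointwise identity for the quotient
    have hheq : ∀ s ∈ Ioi (0:ℝ),
        deriv (fun x : ℝ => x ^ (-(1 / m)) * f x) s / (s ^ (-(1 / m)) * f s) ^ (1 - m)
          = (-(1 / m) * f s ^ m + s * (deriv f s / f s ^ (1 - m))) / s ^ 2 := by
      intro s hs
      have hs0 : (0:ℝ) < s := hs
      have hFs := hfpos' s hs
      have hsα : (0:ℝ) < s ^ (-(1 / m)) := Real.rpow_pos_of_pos hs0 _
      have hAs : (0:ℝ) < f s ^ (1 - m) := Real.rpow_pos_of_pos hFs _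
      rw [(hw' s hs).deriv]
      have e1 : (s ^ (-(1 / m)) * f s) ^ (1 - m) = s ^ (-(1 / m)) * s * f s ^ (1 - m) := by
        rw [Real.mul_rpow hsα.le hFs.le, ← Real.rpow_mul hs0.le,
          show (-(1 / m)) * (1 - m) = -(1 / m) + 1 by field_simp; ring,
          Real.rpow_add hs0, Real.rpow_one]
      have e2 : s ^ (-(1 / m) - 1) = s ^ (-(1 / m)) / s := by
        rw [Real.rpow_sub hs0, Real.rpow_one]
      have e3 : f s ^ m = f s / f s ^ (1 - m) := by
        rw [eq_div_iff hAs.ne', ← Real.rpow_add hFs]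
        norm_num
      rw [e1, e2, e3]
      field_simp
    have hE := hode r hr
    have hqD : HasDerivAt (fun s => deriv f s / f s ^ (1 - m))
        (deriv (fun s => deriv f s / f s ^ (1 - m)) r) r := (hq r hr).differentiableAt.hasDerivAt
    set D := deriv (fun s => deriv f s / f s ^ (1 - m)) r with hDdef
    have hD : D = m / (1 + m) * r * deriv f r - 1 / (1 + m) * f r := by linarith
    -- derivative of Q
    have hQd : HasDerivAt (fun s : ℝ => -(1 / m) * f s ^ m + s * (deriv f s / f s ^ (1 - m)))
        (r * D) r := by
      have ha : HasDerivAt (fun s : ℝ => f s ^ m) (deriv f r * m * f r ^ (m - 1)) r :=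
        (hfd r hr).rpow_const (Or.inl hF.ne')
      have hb := (hasDerivAt_id r).mul hqD
      have h := (ha.const_mul (-(1 / m))).add hb
      have e4 : f r ^ (m - 1) = (f r ^ (1 - m))⁻¹ := by
        rw [show (m - 1 : ℝ) = -(1 - m) by ring, Real.rpow_neg hF.le]
      have e5 : -(1 / m) * (deriv f r * m * f r ^ (m - 1))
          + (1 * (deriv f r / f r ^ (1 - m)) + id r * D) = r * D := by
        rw [e4]
        field_simp
        simp only [id_eq]
        ring
      rw [e5] at h
      exact h
    have hQs := hQd.div (hasDerivAt_pow 2 r) (pow_ne_zero 2 hr0.ne')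
    have hev2 : (fun s => deriv (fun x : ℝ => x ^ (-(1 / m)) * f x) s
          / (s ^ (-(1 / m)) * f s) ^ (1 - m))
        =ᶠ[nhds r] (fun s => (-(1 / m) * f s ^ m + s * (deriv f s / f s ^ (1 - m))) / s ^ 2) := by
      filter_upwards [isOpen_Ioi.mem_nhds hr] with s hs
      exact hheq s hs
    beta_reduce
    rw [hev2.deriv_eq, (show HasDerivAt (fun s => (-(1 / m) * f s ^ m + s * (deriv f s / f s ^ (1 - m))) / s ^ 2) _ r from hQs).deriv, hheq r hr, (hw' r hr).deriv]
    have e2r : r ^ (-(1 / m) - 1) = r ^ (-(1 / m)) / r := by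
      rw [Real.rpow_sub hr0, Real.rpow_one]
    have e3r : f r ^ m = f r / f r ^ (1 - m) := by
      rw [eq_div_iff hA.ne', ← Real.rpow_add hF]
      norm_num
    have e5r : r ^ (1 / m) = (r ^ (-(1 / m)))⁻¹ := by
      rw [← Real.rpow_neg hr0.le, neg_neg]
    have hX : (0:ℝ) < r ^ (-(1 / m)) := Real.rpow_pos_of_pos hr0 _
    rw [e2r, e3r, e5r, hD]
    set X := r ^ (-(1 / m)) with hXdef
    set A := f r ^ (1 - m) with hAdef
    have hXne : X ≠ 0 := hX.ne'
    have hAne : A ≠ 0 := hA.ne'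
    push_cast
    field_simp
    ring
  · intro r hr
    have hr0 : (0:ℝ) < r := hr
    have hφr := hφpos r hr
    beta_reduce
    rw [(hw' r hr).deriv]
    have hx1 : r ^ (-(1 / m)) = r ^ (-(1 / m) - 1) * r := by
      rw [Real.rpow_sub hr0, Real.rpow_one]
      field_simp
    rw [hx1]
    have hrα : (0:ℝ) < r ^ (-(1 / m) - 1) := Real.rpow_pos_of_pos hr0 _
    have h5 : -(1 / m) * r ^ (-(1 / m) - 1) * f r + r ^ (-(1 / m) - 1) * r * deriv f r
        = r ^ (-(1 / m) - 1) * (-(1 / m)) * (f r - m * (r * deriv f r)) := by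
      field_simp
      ring
    rw [h5]
    have hα' : (0:ℝ) < -(1 / m) := by linarith
    exact mul_pos (mul_pos hrα hα') hφr
end
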